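/- arXiv:1002.2341 — 2 statements merged into one kernel-verified Lean document; each statement's English description precedes it below -/
import Mathlib

section
/- Suppose a homogeneous Markov chain Φ on (X,B(X)) is ψ-irreducible and contains an accessible atom α (i.e. P(x,Γ) = P(y,Γ) for all x,y ∈ α and all Γ ∈ B(X)) with E_α[τ_α] < ∞, where τ_α = inf{k ≥ 1 : Φ_k ∈ α}. Then the measure π defined by π(Γ) = (1/E_α[τ_α]) · E_α[ sum_{j=1}^{τ_α} 1{Φ_j ∈ Γ} ] is an invariant probability measure for Φ. -/
open MeasureTheory ProbabilityTheory

variable {X : Type*} [MeasurableSpace X]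

/-- `Pr` is the family of path measures of the homogeneous Markov chain with
transition kernel `K`: `Pr x` is a probability on trajectories, starts at `x`,
and satisfies the Markov property with one-step kernel `K`. -/
def IsMarkovFamily (K : Kernel X X) (Pr : X → Measure (ℕ → X)) : Prop :=
  (∀ x, IsProbabilityMeasure (Pr x)) ∧
  (∀ x, Pr x {ω | ω 0 = x} = 1) ∧
  (∀ x (n : ℕ) (B : Set (Fin (n + 1) → X)), MeasurableSet B →
    ∀ f : X → ENNReal, Measurable f →
      ∫⁻ ω in {ω | (fun i : Fin (n + 1) => ω i.1) ∈ B}, f (ω (n + 1)) ∂ Pr x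
        = ∫⁻ ω in {ω | (fun i : Fin (n + 1) => ω i.1) ∈ B},
            ∫⁻ y, f y ∂ (K (ω n)) ∂ Pr x)

/-- First hitting time (at time ≥ 1) of the set `C`, valued in `ℕ∞`. -/
noncomputable def hitTime (C : Set X) (ω : ℕ → X) : ℕ∞ :=
  sInf {m : ℕ∞ | ∃ k : ℕ, m = k ∧ 1 ≤ k ∧ ω k ∈ C}

/-- `U_A(x,s,V) = E_x[∑_{j=1}^{τ_A} e^{sj} V(Φ_j)]`. -/
noncomputable def hitSum (Pr : X → Measure (ℕ → X)) (A : Set X) (s : ℝ)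
    (V : X → ENNReal) (x : X) : ENNReal :=
  ∫⁻ ω, ∑' j : ℕ,
    Set.indicator {ω' : ℕ → X | 1 ≤ j ∧ (j : ℕ∞) ≤ hitTime A ω'}
      (fun _ => ENNReal.ofReal (Real.exp (s * j)) * V (ω j)) ω ∂ Pr x

/-- `E_α[τ_α]`, written as `∑_{j≥1} P(j ≤ τ_α)` integrated. -/
noncomputable def atomReturnExp (Pr : X → Measure (ℕ → X)) (α : Set X)
    (x₀ : X) : ENNReal :=
  ∫⁻ ω, ∑' j : ℕ,
    Set.indicator {ω' : ℕ → X | 1 ≤ j ∧ (j : ℕ∞) ≤ hitTime α ω'}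
      (fun _ => (1 : ENNReal)) ω ∂ Pr x₀

/-- The (unnormalized) occupation measure of one cycle at the atom:
`Γ ↦ E_α[∑_{j=1}^{τ_α} 1{Φ_j ∈ Γ}]`. -/
noncomputable def cycleOccupation (Pr : X → Measure (ℕ → X)) (α : Set X)
    (x₀ : X) : Measure X :=
  Measure.sum fun j : ℕ =>
    Measure.map (fun ω => ω j)
      ((Pr x₀).restrict {ω | 1 ≤ j ∧ (j : ℕ∞) ≤ hitTime α ω})

lemma hitTime_le_iff' {α : Set X} {ω : ℕ → X} {j : ℕ} :
    (j : ℕ∞) ≤ hitTime α ω ↔ ∀ k, 1 ≤ k → k < j → ω k ∉ α := by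
  unfold hitTime
  rw [le_sInf_iff]
  constructor
  · intro h k hk1 hkj hk
    exact absurd (Nat.cast_le.mp (h (k : ℕ∞) ⟨k, rfl, hk1, hk⟩)) (not_le.mpr hkj)
  · rintro h m ⟨k, rfl, hk1, hk⟩
    exact Nat.cast_le.mpr (not_lt.mp fun hlt => h k hk1 hlt hk)

lemma hitTime_le_of_mem {α : Set X} {ω : ℕ → X} {j : ℕ} (hj : 1 ≤ j) (h : ω j ∈ α) :
    hitTime α ω ≤ (j : ℕ∞) :=
  sInf_le ⟨j, rfl, hj, h⟩

lemma cycSet_eq (α : Set X) (j : ℕ) :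
    {ω : ℕ → X | 1 ≤ j ∧ (j : ℕ∞) ≤ hitTime α ω}
      = {ω : ℕ → X | 1 ≤ j} ∩ ⋂ k ∈ Finset.Ico 1 j, (fun ω : ℕ → X => ω k) ⁻¹' αᶜ := by
  ext ω
  simp only [Set.mem_setOf_eq, Set.mem_inter_iff, Set.mem_iInter, Finset.mem_Ico,
    Set.mem_preimage, Set.mem_compl_iff, hitTime_le_iff']
  tauto

lemma measurable_cycSet {α : Set X} (hα : MeasurableSet α) (j : ℕ) :
    MeasurableSet {ω : ℕ → X | 1 ≤ j ∧ (j : ℕ∞) ≤ hitTime α ω} := by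
  rw [cycSet_eq]
  refine MeasurableSet.inter ?_ ?_
  · by_cases h : 1 ≤ j
    · simp [h]
    · simp [h]
  · exact MeasurableSet.biInter (Finset.countable_toSet _)
      fun k _ => (measurable_pi_apply k) hα.compl

def cylBase (α : Set X) (j : ℕ) : Set (Fin (j + 1) → X) :=
  {f | 1 ≤ j ∧ ∀ i : Fin (j + 1), 1 ≤ (i : ℕ) → (i : ℕ) < j → f i ∉ α}

lemma measurable_cylBase {α : Set X} (hα : MeasurableSet α) (j : ℕ) :
    MeasurableSet (cylBase α j) := by
  have : cylBase α j = {f : Fin (j+1) → X | 1 ≤ j} ∩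
      ⋂ i : Fin (j + 1), {f | 1 ≤ (i : ℕ) → (i : ℕ) < j → f i ∉ α} := by
    ext f; simp [cylBase]
  rw [this]
  refine MeasurableSet.inter ?_ (MeasurableSet.iInter fun i => ?_)
  · by_cases h : 1 ≤ j
    · simp [h]
    · simp [h]
  · by_cases h : 1 ≤ (i : ℕ) ∧ (i : ℕ) < j
    · have : {f : Fin (j+1) → X | 1 ≤ (i : ℕ) → (i : ℕ) < j → f i ∉ α}
          = (fun f : Fin (j+1) → X => f i) ⁻¹' αᶜ := by
        ext f; simp [h.1, h.2]
      rw [this]; exact (measurable_pi_apply i) hα.compl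
    · have : {f : Fin (j+1) → X | 1 ≤ (i : ℕ) → (i : ℕ) < j → f i ∉ α} = Set.univ := by
        ext f; simp only [Set.mem_setOf_eq, Set.mem_univ, iff_true]
        intro h1 h2; exact absurd ⟨h1, h2⟩ h
      rw [this]; exact MeasurableSet.univ

lemma cyl_cylBase (α : Set X) (j : ℕ) :
    {ω : ℕ → X | (fun i : Fin (j + 1) => ω i.1) ∈ cylBase α j}
      = {ω : ℕ → X | 1 ≤ j ∧ (j : ℕ∞) ≤ hitTime α ω} := by
  ext ω
  simp only [Set.mem_setOf_eq, cylBase, hitTime_le_iff']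
  constructor
  · rintro ⟨h1, h⟩
    exact ⟨h1, fun k hk1 hkj => h ⟨k, Nat.lt_succ_of_lt hkj⟩ hk1 hkj⟩
  · rintro ⟨h1, h⟩
    exact ⟨h1, fun i hi1 hij => h i hi1 hij⟩

lemma cyl_cylBase' (α : Set X) (j : ℕ) :
    {ω : ℕ → X | (fun i : Fin (j + 1) => ω i.1)
        ∈ cylBase α j ∩ {f : Fin (j + 1) → X | f (Fin.last j) ∈ α}}
      = {ω : ℕ → X | ω j ∈ α} ∩ {ω : ℕ → X | 1 ≤ j ∧ (j : ℕ∞) ≤ hitTime α ω} := by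
  have h1 : {ω : ℕ → X | (fun i : Fin (j + 1) => ω i.1)
        ∈ cylBase α j ∩ {f : Fin (j + 1) → X | f (Fin.last j) ∈ α}}
      = {ω : ℕ → X | (fun i : Fin (j + 1) => ω i.1) ∈ cylBase α j}
        ∩ {ω : ℕ → X | ω j ∈ α} := by
    ext ω
    simp only [Set.mem_setOf_eq, Set.mem_inter_iff, Fin.val_last]
  rw [h1, cyl_cylBase, Set.inter_comm]

lemma markov_set (K : Kernel X X) (Pr : X → Measure (ℕ → X))
    (hmarkov : ∀ x (n : ℕ) (B : Set (Fin (n + 1) → X)), MeasurableSet B →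
      ∀ f : X → ENNReal, Measurable f →
        ∫⁻ ω in {ω | (fun i : Fin (n + 1) => ω i.1) ∈ B}, f (ω (n + 1)) ∂ Pr x
          = ∫⁻ ω in {ω | (fun i : Fin (n + 1) => ω i.1) ∈ B},
              ∫⁻ y, f y ∂ (K (ω n)) ∂ Pr x)
    (x : X) (j : ℕ) (B : Set (Fin (j + 1) → X)) (hB : MeasurableSet B)
    {Γ : Set X} (hΓ : MeasurableSet Γ) :
    Pr x ((fun ω => ω (j + 1)) ⁻¹' Γ ∩ {ω | (fun i : Fin (j + 1) => ω i.1) ∈ B})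
      = ∫⁻ ω in {ω | (fun i : Fin (j + 1) => ω i.1) ∈ B}, K (ω j) Γ ∂ Pr x := by
  have h := hmarkov x j B hB (Γ.indicator (fun _ => (1:ENNReal))) (measurable_one.indicator hΓ)
  have hpre : MeasurableSet ((fun ω : ℕ → X => ω (j + 1)) ⁻¹' Γ) :=
    (measurable_pi_apply (j + 1)) hΓ
  have hind : ∀ ω : ℕ → X, Γ.indicator (fun _ => (1:ENNReal)) (ω (j + 1))
      = Set.indicator ((fun ω : ℕ → X => ω (j + 1)) ⁻¹' Γ) (fun _ => (1:ENNReal)) ω := by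
    intro ω; rfl
  simp_rw [hind] at h
  rw [lintegral_indicator hpre, Measure.restrict_restrict hpre, setLIntegral_one] at h
  simp_rw [lintegral_indicator hΓ, setLIntegral_one] at h
  exact h


set_option maxHeartbeats 1000000 in
/-- Kac formula: for a `ψ`-irreducible chain with an accessible
atom `α` with integrable return time, the normalized cycle occupation measure
is an invariant probability measure. -/
theorem atom_invariant_measure
    (K : Kernel X X) [IsMarkovKernel K] (Pr : X → Measure (ℕ → X))
    (hchain : IsMarkovFamily K Pr)
    (ψ : Measure X) (hψ : ψ ≠ 0)
    (hirr : ∀ A : Set X, MeasurableSet A → 0 < ψ A →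
      ∀ x, 0 < Pr x {ω | ∃ n : ℕ, 1 ≤ n ∧ ω n ∈ A})
    (α : Set X) (hα : MeasurableSet α) (hacc : 0 < ψ α)
    (hatom : ∀ x ∈ α, ∀ y ∈ α, K x = K y)
    (x₀ : X) (hx₀ : x₀ ∈ α)
    (hfin : atomReturnExp Pr α x₀ < ⊤) :
    IsProbabilityMeasure ((atomReturnExp Pr α x₀)⁻¹ • cycleOccupation Pr α x₀) ∧
    ∀ Γ : Set X, MeasurableSet Γ →
      ((atomReturnExp Pr α x₀)⁻¹ • cycleOccupation Pr α x₀) Γ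
        = ∫⁻ z, K z Γ ∂ ((atomReturnExp Pr α x₀)⁻¹ • cycleOccupation Pr α x₀) := by
  obtain ⟨hprob, hstart, hmarkov⟩ := hchain
  haveI := hprob x₀
  set A : ℕ → Set (ℕ → X) := fun j => {ω | 1 ≤ j ∧ (j : ℕ∞) ≤ hitTime α ω} with hAdef
  have hAm : ∀ j, MeasurableSet (A j) := fun j => measurable_cycSet hα j
  have hA0 : A 0 = ∅ := by
    ext ω; simp [hAdef]
  have hA1 : A 1 = Set.univ := by
    ext ω
    simp only [hAdef, Set.mem_setOf_eq, Set.mem_univ, iff_true]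
    exact ⟨le_refl 1, hitTime_le_iff'.mpr fun k hk1 hk => absurd hk1 (by omega)⟩
  -- the expectation as a series
  have hexp : atomReturnExp Pr α x₀ = ∑' j, Pr x₀ (A j) := by
    have : atomReturnExp Pr α x₀
        = ∫⁻ ω, ∑' j : ℕ, (A j).indicator (fun _ => (1 : ENNReal)) ω ∂ Pr x₀ := rfl
    rw [this, lintegral_tsum fun j => ((measurable_const (a := (1 : ENNReal))).indicator (hAm j)).aemeasurable]
    exact tsum_congr fun j => by
      rw [lintegral_indicator (hAm j), setLIntegral_const, one_mul]
  -- the occupation measure applied to a set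
  have hcycapp : ∀ Γ : Set X, MeasurableSet Γ →
      cycleOccupation Pr α x₀ Γ = ∑' j, Pr x₀ ((fun ω => ω j) ⁻¹' Γ ∩ A j) := by
    intro Γ hΓ
    unfold cycleOccupation
    rw [Measure.sum_apply _ hΓ]
    exact tsum_congr fun j => by
      rw [Measure.map_apply (measurable_pi_apply j) hΓ,
        Measure.restrict_apply ((measurable_pi_apply j) hΓ)]
  have hmass : cycleOccupation Pr α x₀ Set.univ = atomReturnExp Pr α x₀ := by
    rw [hcycapp _ MeasurableSet.univ, hexp]
    exact tsum_congr fun j => by rw [Set.preimage_univ, Set.univ_inter]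
  have hcne0 : atomReturnExp Pr α x₀ ≠ 0 := by
    rw [hexp]
    intro h
    have h1 : Pr x₀ (A 1) ≤ ∑' j, Pr x₀ (A j) := ENNReal.le_tsum 1
    rw [h, hA1, measure_univ] at h1
    exact absurd h1 (by norm_num)
  have hcnet : atomReturnExp Pr α x₀ ≠ ⊤ := hfin.ne
  have hPmain : IsProbabilityMeasure
      ((atomReturnExp Pr α x₀)⁻¹ • cycleOccupation Pr α x₀) := by
    constructor
    rw [Measure.smul_apply, smul_eq_mul, hmass]
    exact ENNReal.inv_mul_cancel hcne0 hcnet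
  refine ⟨hPmain, fun Γ hΓ => ?_⟩
  -- notation
  set a : ℕ → ENNReal := fun j => Pr x₀ ((fun ω => ω j) ⁻¹' Γ ∩ A j) with hadef
  set E : ℕ → Set (ℕ → X) := fun j => {ω | ω j ∈ α} ∩ A j with hEdef
  have hEm : ∀ j, MeasurableSet (E j) :=
    fun j => ((measurable_pi_apply j) hα).inter (hAm j)
  set q : ℕ → ENNReal := fun j => Pr x₀ ((fun ω => ω (j + 1)) ⁻¹' Γ ∩ E j) with hqdef
  set b : ℕ → ENNReal := fun j => Pr x₀ ((fun ω => ω (j + 1)) ⁻¹' Γ ∩ A j) with hbdef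
  -- Markov property for A j
  have hb : ∀ j, ∫⁻ ω in A j, K (ω j) Γ ∂ Pr x₀ = b j := by
    intro j
    have h := markov_set K Pr hmarkov x₀ j (cylBase α j) (measurable_cylBase hα j) hΓ
    rw [cyl_cylBase] at h
    exact h.symm
  -- Markov property + atom property for E j
  have hq : ∀ j, q j = K x₀ Γ * Pr x₀ (E j) := by
    intro j
    have hB : MeasurableSet (cylBase α j ∩ {f : Fin (j + 1) → X | f (Fin.last j) ∈ α}) :=
      (measurable_cylBase hα j).inter ((measurable_pi_apply (Fin.last j)) hα)
    have h := markov_set K Pr hmarkov x₀ j _ hB hΓ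
    rw [cyl_cylBase'] at h
    rw [hqdef]
    simp only []
    rw [h]
    rw [setLIntegral_congr_fun_ae (hEm j)
      (ae_of_all _ fun ω hω => by
        rw [hatom (ω j) hω.1 x₀ hx₀] : ∀ᵐ ω ∂ Pr x₀, ω ∈ E j → K (ω j) Γ = K x₀ Γ)]
    exact setLIntegral_const _ _
  -- disjointness of the E j
  have hdisj : ∀ i j : ℕ, i < j → Disjoint (E i) (E j) := by
    intro i j hij
    rw [Set.disjoint_left]
    rintro ω ⟨hωi, hi1, _⟩ ⟨_, _, hjτ⟩
    have h1 : hitTime α ω ≤ (i : ℕ∞) := hitTime_le_of_mem hi1 hωi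
    exact absurd (Nat.cast_le.mp (le_trans hjτ h1)) (by omega)
  have hEdisj : Pairwise (Function.onFun Disjoint E) := fun i j hij =>
    hij.lt_or_gt.elim (hdisj i j) fun h => (hdisj j i h).symm
  -- the union of the E j is the hitting event
  have hU : (⋃ j, E j) = {ω : ℕ → X | ∃ k, 1 ≤ k ∧ ω k ∈ α} := by
    ext ω
    simp only [Set.mem_iUnion, Set.mem_setOf_eq, Set.mem_inter_iff, hEdef, hAdef]
    constructor
    · rintro ⟨j, hωj, hj1, _⟩
      exact ⟨j, hj1, hωj⟩
    · rintro ⟨k, hk1, hk⟩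
      classical
      have hex : ∃ k, 1 ≤ k ∧ ω k ∈ α := ⟨k, hk1, hk⟩
      refine ⟨Nat.find hex, (Nat.find_spec hex).2, (Nat.find_spec hex).1, ?_⟩
      rw [hitTime_le_iff']
      intro m hm1 hmn hmα
      exact Nat.find_min hex hmn ⟨hm1, hmα⟩
  -- the hitting event has probability one
  have hHm : MeasurableSet {ω : ℕ → X | ∃ k, 1 ≤ k ∧ ω k ∈ α} := by
    rw [← hU]; exact MeasurableSet.iUnion hEm
  have hHc : Pr x₀ ({ω : ℕ → X | ∃ k, 1 ≤ k ∧ ω k ∈ α}ᶜ) = 0 := by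
    by_contra h
    have hsub : ∀ j : ℕ, {ω : ℕ → X | ∃ k, 1 ≤ k ∧ ω k ∈ α}ᶜ ⊆ A (j + 1) := by
      intro j ω hω
      exact ⟨Nat.succ_le_succ (Nat.zero_le j),
        hitTime_le_iff'.mpr fun k hk1 _ hk => hω ⟨k, hk1, hk⟩⟩
    have hle : (∑' _ : ℕ, Pr x₀ ({ω : ℕ → X | ∃ k, 1 ≤ k ∧ ω k ∈ α}ᶜ))
        ≤ ∑' j, Pr x₀ (A (j + 1)) :=
      ENNReal.tsum_le_tsum fun j => measure_mono (hsub j)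
    have h2 : (∑' j, Pr x₀ (A (j + 1))) ≤ ∑' j, Pr x₀ (A j) :=
      ENNReal.tsum_comp_le_tsum_of_injective (add_left_injective 1) fun j => Pr x₀ (A j)
    have h3 : (∑' _ : ℕ, Pr x₀ ({ω : ℕ → X | ∃ k, 1 ≤ k ∧ ω k ∈ α}ᶜ)) = ⊤ :=
      ENNReal.tsum_const_eq_top_of_ne_zero h
    rw [h3] at hle
    rw [← hexp] at h2
    exact absurd (le_trans hle h2) (by simp [hcnet, top_le_iff])
  have hEsum : ∑' j, Pr x₀ (E j) = 1 := by
    rw [← measure_iUnion hEdisj hEm, hU]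
    rw [measure_compl hHm (measure_ne_top _ _), measure_univ] at hHc
    exact le_antisymm prob_le_one (tsub_eq_zero_iff_le.mp hHc)
  -- splitting of a cycle set
  have hAsplit : ∀ j : ℕ, 1 ≤ j → A j = A (j + 1) ∪ E j := by
    intro j hj
    ext ω
    simp only [hAdef, hEdef, Set.mem_union, Set.mem_inter_iff, Set.mem_setOf_eq]
    constructor
    · rintro ⟨h1, hτ⟩
      by_cases hω : ω j ∈ α
      · exact Or.inr ⟨hω, h1, hτ⟩
      · refine Or.inl ⟨by omega, ?_⟩
        rw [hitTime_le_iff'] at hτ ⊢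
        intro k hk1 hklt
        rcases Nat.lt_succ_iff_lt_or_eq.mp hklt with h | h
        · exact hτ k hk1 h
        · rw [h]; exact hω
    · rintro (⟨h1, hτ⟩ | ⟨hω, h1, hτ⟩)
      · exact ⟨by omega, le_trans (Nat.cast_le.mpr (Nat.le_succ j)) hτ⟩
      · exact ⟨h1, hτ⟩
  have hdAE : ∀ j : ℕ, Disjoint (A (j + 1)) (E j) := by
    intro j
    rw [Set.disjoint_left]
    rintro ω ⟨_, hτ⟩ ⟨hωj, hj1, _⟩
    have h1 := le_trans hτ (hitTime_le_of_mem hj1 hωj)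
    exact absurd (Nat.cast_le.mp h1) (by omega)
  have hsplit : ∀ j : ℕ, 1 ≤ j → b j = a (j + 1) + q j := by
    intro j hj
    rw [hbdef]
    simp only []
    rw [hAsplit j hj, Set.inter_union_distrib_left,
      measure_union (Set.disjoint_of_subset Set.inter_subset_right
        Set.inter_subset_right (hdAE j))
        (((measurable_pi_apply (j + 1)) hΓ).inter (hEm j))]
  -- the first term
  have ha1 : a 1 = K x₀ Γ := by
    have hTm : MeasurableSet {ω : ℕ → X | ω 0 ∈ α} := (measurable_pi_apply 0) hα
    have hT : Pr x₀ {ω : ℕ → X | ω 0 ∈ α} = 1 := by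
      refine le_antisymm prob_le_one ?_
      calc (1 : ENNReal) = Pr x₀ {ω | ω 0 = x₀} := (hstart x₀).symm
        _ ≤ Pr x₀ {ω : ℕ → X | ω 0 ∈ α} := by
            refine measure_mono fun ω h => ?_
            rw [Set.mem_setOf_eq] at h ⊢
            rw [h]; exact hx₀
    have hTc : Pr x₀ ({ω : ℕ → X | ω 0 ∈ α}ᶜ) = 0 := by
      rw [measure_compl hTm (measure_ne_top _ _), measure_univ, hT, tsub_self]
    have e1 : a 1 = Pr x₀ ((fun ω : ℕ → X => ω 1) ⁻¹' Γ) := by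
      rw [hadef]; simp only []
      rw [hA1, Set.inter_univ]
    have e2 : Pr x₀ ((fun ω : ℕ → X => ω 1) ⁻¹' Γ)
        = Pr x₀ ((fun ω : ℕ → X => ω 1) ⁻¹' Γ ∩ {ω : ℕ → X | ω 0 ∈ α}) := by
      have hdiff : Pr x₀ ((fun ω : ℕ → X => ω 1) ⁻¹' Γ \ {ω : ℕ → X | ω 0 ∈ α}) = 0 :=
        measure_mono_null (Set.diff_subset_compl _ _) hTc
      have h6 := measure_inter_add_diff (μ := Pr x₀)
        ((fun ω : ℕ → X => ω 1) ⁻¹' Γ) hTm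
      rw [hdiff, add_zero] at h6
      exact h6.symm
    have hB0 : MeasurableSet {f : Fin 1 → X | f 0 ∈ α} := (measurable_pi_apply (0 : Fin 1)) hα
    have h0 := markov_set K Pr hmarkov x₀ 0 {f : Fin 1 → X | f 0 ∈ α} hB0 hΓ
    have hcyl0 : {ω : ℕ → X | (fun i : Fin 1 => ω i.1) ∈ {f : Fin 1 → X | f 0 ∈ α}}
        = {ω : ℕ → X | ω 0 ∈ α} := rfl
    rw [hcyl0] at h0
    rw [e1, e2, h0]
    rw [setLIntegral_congr_fun_ae hTm
      (ae_of_all _ fun ω hω => by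
        rw [hatom (ω 0) hω x₀ hx₀] : ∀ᵐ ω ∂ Pr x₀, ω ∈ {ω : ℕ → X | ω 0 ∈ α} → K (ω 0) Γ = K x₀ Γ)]
    rw [setLIntegral_const, hT, mul_one]
  -- sum of the q's
  have hqsum : ∑' j, q j = K x₀ Γ := by
    calc ∑' j, q j = ∑' j, K x₀ Γ * Pr x₀ (E j) := tsum_congr hq
      _ = K x₀ Γ * ∑' j, Pr x₀ (E j) := ENNReal.tsum_mul_left
      _ = K x₀ Γ := by rw [hEsum, mul_one]
  have ha0 : a 0 = 0 := by
    rw [hadef]; simp only []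
    rw [hA0, Set.inter_empty, measure_empty]
  have hb0 : b 0 = 0 := by
    rw [hbdef]; simp only []
    rw [hA0, Set.inter_empty, measure_empty]
  have hq0 : q 0 = 0 := by
    rw [hqdef]; simp only []
    have : E 0 = ∅ := by rw [hEdef]; simp only []; rw [hA0, Set.inter_empty]
    rw [this, Set.inter_empty, measure_empty]
  have hqtail : ∑' n, q (n + 1) = K x₀ Γ := by
    have := tsum_eq_zero_add' (f := q) ENNReal.summable
    rw [hq0, zero_add] at this
    rw [← this, hqsum]
  -- the key series identity
  have key : ∑' j, a j = ∑' j, b j := by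
    calc ∑' j, a j = a 0 + ∑' n, a (n + 1) := tsum_eq_zero_add' ENNReal.summable
      _ = a 1 + ∑' n, a (n + 2) := by
          rw [ha0, zero_add, tsum_eq_zero_add' (f := fun n => a (n + 1)) ENNReal.summable]
      _ = (∑' n, a (n + 2)) + ∑' n, q (n + 1) := by rw [hqtail, ha1, add_comm]
      _ = ∑' n, (a (n + 2) + q (n + 1)) := ENNReal.tsum_add.symm
      _ = ∑' n, b (n + 1) := tsum_congr fun n => (hsplit (n + 1) (by omega)).symm
      _ = b 0 + ∑' n, b (n + 1) := by rw [hb0, zero_add]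
      _ = ∑' j, b j := (tsum_eq_zero_add' ENNReal.summable).symm
  -- conclude
  rw [Measure.smul_apply, smul_eq_mul, hcycapp Γ hΓ, lintegral_smul_measure]
  have hRHS : ∫⁻ z, K z Γ ∂ cycleOccupation Pr α x₀ = ∑' j, b j := by
    unfold cycleOccupation
    rw [lintegral_sum_measure]
    exact tsum_congr fun j => by
      rw [lintegral_map (K.measurable_coe hΓ) (measurable_pi_apply j)]
      exact hb j
  rw [hRHS, ← key, smul_eq_mul]
end

section
/- If the split chain (Φ̌_n) admits an invariant probability measure π̌ on B(X̌), then the measure π on B(X) defined by π(Γ) = π̌(Γ_0) + π̌(Γ_1) is an invariant probability measure for the original chain (Φ_n), and moreover π̌ = π*. -/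
open MeasureTheory ProbabilityTheory

variable {X : Type*} [MeasurableSpace X]

/-- The splitting `λ*` of a measure `λ` on `X`:
`λ*(A₀) = (1−δ)λ(A∩C) + λ(A∩Cᶜ)`, `λ*(A₁) = δλ(A∩C)`. -/
noncomputable def splitMeasure (C : Set X) (δ : ℝ) (μ0 : Measure X) :
    Measure (X × Bool) :=
  Measure.map (fun x => (x, false))
      (ENNReal.ofReal (1 - δ) • μ0.restrict C + μ0.restrict Cᶜ)
    + Measure.map (fun x => (x, true)) (ENNReal.ofReal δ • μ0.restrict C)

open Classical in
/-- The kernel `Q` of the split-chain construction. -/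
noncomputable def splitQ (P : Kernel X X) (ν : Measure X) (C : Set X) (δ : ℝ)
    (xs : X × Bool) : Measure X :=
  if xs.2 = true then ν
  else if xs.1 ∈ C then
    (ENNReal.ofReal (1 - δ))⁻¹ • ((P xs.1) - ENNReal.ofReal δ • ν)
  else P xs.1

/-- The split (Nummelin) transition kernel `P̌(xs,·) = Q(xs,·)*`. -/
noncomputable def splitKernel (P : Kernel X X) (ν : Measure X) (C : Set X)
    (δ : ℝ) (xs : X × Bool) : Measure (X × Bool) :=
  splitMeasure C δ (splitQ P ν C δ xs)

lemma splitMeasure_apply' (C : Set X) (hC : MeasurableSet C) (δ : ℝ)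
    (μ0 : Measure X) {G : Set (X × Bool)} (hG : MeasurableSet G) :
    splitMeasure C δ μ0 G =
      ENNReal.ofReal (1 - δ) * μ0 (((fun x => (x, false)) ⁻¹' G) ∩ C)
      + μ0 (((fun x => (x, false)) ⁻¹' G) ∩ Cᶜ)
      + ENNReal.ofReal δ * μ0 (((fun x => (x, true)) ⁻¹' G) ∩ C) := by
  have hf : Measurable (fun x : X => (x, false)) := measurable_id.prodMk measurable_const
  have ht : Measurable (fun x : X => (x, true)) := measurable_id.prodMk measurable_const
  rw [splitMeasure, Measure.add_apply, Measure.map_apply hf hG, Measure.map_apply ht hG,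
    Measure.add_apply, Measure.smul_apply, Measure.smul_apply,
    Measure.restrict_apply (hf hG), Measure.restrict_apply (hf hG),
    Measure.restrict_apply (ht hG)]
  simp [smul_eq_mul]

lemma splitMeasure_fst' (C : Set X) (hC : MeasurableSet C) {δ : ℝ}
    (hδ0 : 0 ≤ δ) (hδ1 : δ ≤ 1) (μ0 : Measure X) {A : Set X} (hA : MeasurableSet A) :
    splitMeasure C δ μ0 (Prod.fst ⁻¹' A) = μ0 A := by
  rw [splitMeasure_apply' C hC δ μ0 (measurable_fst hA)]
  have h1 : (fun x : X => (x, false)) ⁻¹' (Prod.fst ⁻¹' A) = A := rfl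
  have h2 : (fun x : X => (x, true)) ⁻¹' (Prod.fst ⁻¹' A) = A := rfl
  rw [h1, h2]
  have h3 : ENNReal.ofReal (1 - δ) * μ0 (A ∩ C) + μ0 (A ∩ Cᶜ)
      + ENNReal.ofReal δ * μ0 (A ∩ C)
      = (ENNReal.ofReal (1 - δ) + ENNReal.ofReal δ) * μ0 (A ∩ C) + μ0 (A ∩ Cᶜ) := by ring
  rw [h3, ← ENNReal.ofReal_add (by linarith) hδ0]
  have h4 : (1 - δ) + δ = 1 := by ring
  rw [h4, ENNReal.ofReal_one, one_mul]
  simpa [Set.diff_eq] using measure_inter_add_diff (μ := μ0) A hC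

lemma lintegral_splitMeasure' (C : Set X) (δ : ℝ) (μ0 : Measure X)
    {f : X × Bool → ENNReal} (hf : Measurable f) :
    ∫⁻ xs, f xs ∂ splitMeasure C δ μ0 =
      ENNReal.ofReal (1 - δ) * ∫⁻ x in C, f (x, false) ∂μ0
      + ∫⁻ x in Cᶜ, f (x, false) ∂μ0
      + ENNReal.ofReal δ * ∫⁻ x in C, f (x, true) ∂μ0 := by
  have hfm : Measurable (fun x : X => (x, false)) := measurable_id.prodMk measurable_const
  have htm : Measurable (fun x : X => (x, true)) := measurable_id.prodMk measurable_const
  rw [splitMeasure, lintegral_add_measure, lintegral_map hf hfm, lintegral_map hf htm,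
    lintegral_add_measure, lintegral_smul_measure, lintegral_smul_measure]
  simp only [smul_eq_mul]

open Classical in
lemma splitQ_false_mem' (P : Kernel X X) (ν : Measure X)
    [IsProbabilityMeasure ν] {C : Set X} {δ : ℝ} {x : X}
    (hsub : ENNReal.ofReal δ • ν ≤ P x) (hx : x ∈ C)
    {A : Set X} (hA : MeasurableSet A) :
    splitQ P ν C δ (x, false) A
      = (ENNReal.ofReal (1 - δ))⁻¹ * (P x A - ENNReal.ofReal δ * ν A) := by
  haveI := ν.smul_finite (c := ENNReal.ofReal δ) ENNReal.ofReal_ne_top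
  rw [splitQ]
  simp only [if_neg (by simp : ¬((x, false).2 = true)), if_pos hx]
  rw [Measure.smul_apply, Measure.sub_apply hA hsub, Measure.smul_apply,
    smul_eq_mul, smul_eq_mul]

open Classical in
lemma splitQ_false_notMem' (P : Kernel X X) (ν : Measure X)
    {C : Set X} {δ : ℝ} {x : X} (hx : x ∉ C) :
    splitQ P ν C δ (x, false) = P x := by
  rw [splitQ]
  simp [hx]

open Classical in
lemma splitQ_true' (P : Kernel X X) (ν : Measure X) (C : Set X) (δ : ℝ) (x : X) :
    splitQ P ν C δ (x, true) = ν := by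
  simp [splitQ]

open Classical in
lemma splitQ_measurable' (P : Kernel X X) [IsMarkovKernel P] (ν : Measure X)
    [IsProbabilityMeasure ν] {C : Set X} (hC : MeasurableSet C) {δ : ℝ}
    (hsub : ∀ x ∈ C, ENNReal.ofReal δ • ν ≤ P x)
    {A : Set X} (hA : MeasurableSet A) :
    Measurable (fun xs : X × Bool => splitQ P ν C δ xs A) := by
  have heq : (fun xs : X × Bool => splitQ P ν C δ xs A)
      = fun xs : X × Bool => if xs.2 = true then ν A
        else if xs.1 ∈ C then
          (ENNReal.ofReal (1 - δ))⁻¹ * (P xs.1 A - ENNReal.ofReal δ * ν A)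
        else P xs.1 A := by
    funext xs
    obtain ⟨x, b⟩ := xs
    cases b with
    | true => simp [splitQ_true']
    | false =>
      by_cases hx : x ∈ C
      · simp only [if_neg (by simp : ¬(((x, false) : X × Bool).2 = true)), if_pos hx]
        exact splitQ_false_mem' P ν (hsub x hx) hx hA
      · simp only [if_neg (by simp : ¬(((x, false) : X × Bool).2 = true)), if_neg hx]
        rw [splitQ_false_notMem' P ν hx]
  rw [heq]
  have hg : Measurable (fun x : X => if x ∈ C then
      (ENNReal.ofReal (1 - δ))⁻¹ * (P x A - ENNReal.ofReal δ * ν A) else P x A) := by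
    refine Measurable.ite hC ?_ (P.measurable_coe hA)
    exact ((P.measurable_coe hA).sub measurable_const).const_mul _
  have hs : MeasurableSet {xs : X × Bool | xs.2 = true} :=
    measurable_snd (measurableSet_singleton true)
  exact Measurable.ite hs measurable_const (hg.comp measurable_fst)

/-- if the split chain admits an invariant probability measure
`π̌`, then `π(Γ) = π̌(Γ×{0}) + π̌(Γ×{1})` is an invariant probability measure
for the original chain, and `π̌ = π*`. -/
theorem split_invariant_projects
    (P : Kernel X X) [IsMarkovKernel P]
    (C : Set X) (hC : MeasurableSet C)
    (ν : Measure X) [IsProbabilityMeasure ν] (hνC : ν C = 1)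
    (δ : ℝ) (hδ0 : 0 < δ) (hδ : δ < 1 / 2)
    (hminor : ∀ x, ∀ A : Set X, MeasurableSet A →
      ENNReal.ofReal (2 * δ) * C.indicator 1 x * ν A ≤ P x A)
    (πs : Measure (X × Bool)) [IsProbabilityMeasure πs]
    (hinv : ∀ G : Set (X × Bool), MeasurableSet G →
      ∫⁻ xs, splitKernel P ν C δ xs G ∂ πs = πs G) :
    IsProbabilityMeasure (πs.map Prod.fst) ∧
    (∀ Γ : Set X, MeasurableSet Γ →
      (πs.map Prod.fst) Γ = πs (Γ ×ˢ {false}) + πs (Γ ×ˢ {true})) ∧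
    (∀ Γ : Set X, MeasurableSet Γ →
      ∫⁻ x, P x Γ ∂ (πs.map Prod.fst) = (πs.map Prod.fst) Γ) ∧
    πs = splitMeasure C δ (πs.map Prod.fst) := by
  have hδ01 : (0:ℝ) ≤ δ := hδ0.le
  have hδ11 : δ ≤ 1 := by linarith
  have hc1pos : (0:ℝ) < 1 - δ := by linarith
  have hc1ne0 : ENNReal.ofReal (1 - δ) ≠ 0 := by
    simp [ENNReal.ofReal_pos.mpr hc1pos, (ENNReal.ofReal_pos.mpr hc1pos).ne']
  have hc1net : ENNReal.ofReal (1 - δ) ≠ ⊤ := ENNReal.ofReal_ne_top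
  -- the key minorization consequence
  have hlease : ∀ x ∈ C, ∀ A : Set X, MeasurableSet A →
      ENNReal.ofReal δ * ν A ≤ P x A := by
    intro x hx A hA
    have h1 : ENNReal.ofReal δ * ν A ≤ ENNReal.ofReal (2 * δ) * ν A :=
      mul_le_mul_left (ENNReal.ofReal_le_ofReal (by linarith)) _
    have h2 : ENNReal.ofReal (2 * δ) * C.indicator 1 x * ν A = ENNReal.ofReal (2 * δ) * ν A := by
      rw [Set.indicator_of_mem hx, Pi.one_apply, mul_one]
    calc ENNReal.ofReal δ * ν A ≤ ENNReal.ofReal (2 * δ) * ν A := h1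
      _ = ENNReal.ofReal (2 * δ) * C.indicator 1 x * ν A := h2.symm
      _ ≤ P x A := hminor x A hA
  have hsub : ∀ x ∈ C, ENNReal.ofReal δ • ν ≤ P x := by
    intro x hx
    refine Measure.le_iff.mpr fun s hs => ?_
    simpa [smul_eq_mul] using hlease x hx s hs
  have hmeasQ : ∀ {A : Set X}, MeasurableSet A →
      Measurable (fun xs : X × Bool => splitQ P ν C δ xs A) :=
    fun hA => splitQ_measurable' P ν hC hsub hA
  -- key identity (K1)
  have hK1 : ∀ A : Set X, MeasurableSet A →
      (πs.map Prod.fst) A = ∫⁻ xs, splitQ P ν C δ xs A ∂πs := by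
    intro A hA
    rw [Measure.map_apply measurable_fst hA, ← hinv _ (measurable_fst hA)]
    refine lintegral_congr fun xs => ?_
    exact splitMeasure_fst' C hC hδ01 hδ11 _ hA
  -- conjunct 4
  have h4 : πs = splitMeasure C δ (πs.map Prod.fst) := by
    ext G hG
    have hGf : MeasurableSet ((fun x : X => (x, false)) ⁻¹' G) :=
      (measurable_id.prodMk measurable_const) hG
    have hGt : MeasurableSet ((fun x : X => (x, true)) ⁻¹' G) :=
      (measurable_id.prodMk measurable_const) hG
    rw [← hinv G hG, splitMeasure_apply' C hC δ _ hG,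
      hK1 _ (hGf.inter hC), hK1 _ (hGf.inter hC.compl), hK1 _ (hGt.inter hC)]
    have heq : ∀ xs : X × Bool, splitKernel P ν C δ xs G =
        ENNReal.ofReal (1 - δ) * splitQ P ν C δ xs (((fun x => (x, false)) ⁻¹' G) ∩ C)
        + splitQ P ν C δ xs (((fun x => (x, false)) ⁻¹' G) ∩ Cᶜ)
        + ENNReal.ofReal δ * splitQ P ν C δ xs (((fun x => (x, true)) ⁻¹' G) ∩ C) :=
      fun xs => splitMeasure_apply' C hC δ _ hG
    rw [lintegral_congr heq,
      lintegral_add_right _ ((hmeasQ (hGt.inter hC)).const_mul _),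
      lintegral_add_right _ (hmeasQ (hGf.inter hC.compl)),
      lintegral_const_mul' _ _ ENNReal.ofReal_ne_top,
      lintegral_const_mul' _ _ ENNReal.ofReal_ne_top]
  refine ⟨Measure.isProbabilityMeasure_map measurable_fst.aemeasurable, ?_, ?_, h4⟩
  · -- conjunct 2
    intro Γ hΓ
    have h1 : MeasurableSet (Γ ×ˢ ({false} : Set Bool)) :=
      hΓ.prod (measurableSet_singleton _)
    have h2 : MeasurableSet (Γ ×ˢ ({true} : Set Bool)) :=
      hΓ.prod (measurableSet_singleton _)
    have hd : Disjoint (Γ ×ˢ ({false} : Set Bool)) (Γ ×ˢ ({true} : Set Bool)) := by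
      refine Set.disjoint_left.mpr ?_
      rintro ⟨x, b⟩ ⟨-, hb⟩ ⟨-, hb'⟩
      simp only [Set.mem_singleton_iff] at hb hb'
      rw [hb] at hb'; exact Bool.false_ne_true hb'
    have hu : Γ ×ˢ ({false} : Set Bool) ∪ Γ ×ˢ ({true} : Set Bool) = Prod.fst ⁻¹' Γ := by
      ext ⟨x, b⟩; cases b <;> simp
    rw [Measure.map_apply measurable_fst hΓ, ← hu, measure_union hd h2]
  · -- conjunct 3
    intro Γ hΓ
    have hQm : Measurable (fun xs : X × Bool => splitQ P ν C δ xs Γ) := hmeasQ hΓ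
    rw [hK1 Γ hΓ]
    conv_rhs => rw [h4]
    rw [lintegral_splitMeasure' C δ _ hQm]
    set π := πs.map Prod.fst with hπdef
    -- middle term
    have hmid : ∫⁻ x in Cᶜ, splitQ P ν C δ (x, false) Γ ∂π = ∫⁻ x in Cᶜ, P x Γ ∂π := by
      refine setLIntegral_congr_fun hC.compl (fun x hx => ?_)
      rw [splitQ_false_notMem' P ν hx]
    -- first term
    have hfirst : ENNReal.ofReal (1 - δ) * ∫⁻ x in C, splitQ P ν C δ (x, false) Γ ∂π
        = ∫⁻ x in C, (P x Γ - ENNReal.ofReal δ * ν Γ) ∂π := by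
      have e1 : ∫⁻ x in C, splitQ P ν C δ (x, false) Γ ∂π
          = ∫⁻ x in C, (ENNReal.ofReal (1 - δ))⁻¹ * (P x Γ - ENNReal.ofReal δ * ν Γ) ∂π := by
        refine setLIntegral_congr_fun hC (fun x hx => ?_)
        exact splitQ_false_mem' P ν (hsub x hx) hx hΓ
      rw [e1, lintegral_const_mul' _ _ (ENNReal.inv_ne_top.mpr hc1ne0), ← mul_assoc,
        ENNReal.mul_inv_cancel hc1ne0 hc1net, one_mul]
    -- third term
    have hthird : ENNReal.ofReal δ * ∫⁻ x in C, splitQ P ν C δ (x, true) Γ ∂π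
        = ∫⁻ x in C, ENNReal.ofReal δ * ν Γ ∂π := by
      rw [lintegral_const_mul' _ _ ENNReal.ofReal_ne_top]
      have : ∫⁻ x in C, splitQ P ν C δ (x, true) Γ ∂π = ∫⁻ x in C, ν Γ ∂π := by
        refine setLIntegral_congr_fun hC (fun x hx => ?_)
        rw [splitQ_true']
      rw [this]
    rw [hfirst, hmid, hthird]
    have hcomb : ∫⁻ x in C, (P x Γ - ENNReal.ofReal δ * ν Γ) ∂π
        + ∫⁻ x in Cᶜ, P x Γ ∂π + ∫⁻ x in C, ENNReal.ofReal δ * ν Γ ∂π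
        = ∫⁻ x in C, P x Γ ∂π + ∫⁻ x in Cᶜ, P x Γ ∂π := by
      have e2 : ∫⁻ x in C, (P x Γ - ENNReal.ofReal δ * ν Γ) ∂π
          + ∫⁻ x in C, ENNReal.ofReal δ * ν Γ ∂π
          = ∫⁻ x in C, ((P x Γ - ENNReal.ofReal δ * ν Γ) + ENNReal.ofReal δ * ν Γ) ∂π :=
        (lintegral_add_right _ measurable_const).symm
      have e3 : ∫⁻ x in C, ((P x Γ - ENNReal.ofReal δ * ν Γ) + ENNReal.ofReal δ * ν Γ) ∂π
          = ∫⁻ x in C, P x Γ ∂π := by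
        refine setLIntegral_congr_fun hC (fun x hx => ?_)
        exact tsub_add_cancel_of_le (hlease x hx Γ hΓ)
      calc ∫⁻ x in C, (P x Γ - ENNReal.ofReal δ * ν Γ) ∂π
          + ∫⁻ x in Cᶜ, P x Γ ∂π + ∫⁻ x in C, ENNReal.ofReal δ * ν Γ ∂π
          = (∫⁻ x in C, (P x Γ - ENNReal.ofReal δ * ν Γ) ∂π
            + ∫⁻ x in C, ENNReal.ofReal δ * ν Γ ∂π) + ∫⁻ x in Cᶜ, P x Γ ∂π := by ring
        _ = ∫⁻ x in C, P x Γ ∂π + ∫⁻ x in Cᶜ, P x Γ ∂π := by rw [e2, e3]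
    rw [hcomb]
    exact (lintegral_add_compl (fun x => P x Γ) hC).symm
end
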